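/- Let o be a noetherian commutative ring, F a nonarchimedean local field, B the upper triangular subgroup of GL(2,F). Let 0 -> V' -> V -> V'' -> 0 be an exact sequence of smooth representations of B over o with V' of finite type over o[B] and V of finite presentation relative to B_0 Z. Let ind_{B_0 Z}^B(V_0) -> V be a finite presentation of V with V_0 an o[B_0 Z]-submodule of V, such that in the induced exact sequence 0 -> V_0' -> V_0 -> V_0'' -> 0 of o[B_0 Z]-modules (V_0' := V_0 ∩ V', V_0'' the image of V_0 in V'') the submodule V_0' generates V' over o[B]. Then, writing f : V' -> V for the inclusion, there exists an o[B_0 Z]-submodule N of V, finitely generated over o[B_0 Z], such that <B^+ V_0> ∩ f(V') is contained in f(<B^+ V_0'>) + N; consequently the sequence 0 -> <B^+ V_0'> -> <B^+ V_0> -> <B^+ V_0''> -> 0 is exact modulo finitely generated o[B_0 Z]-modules. -/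

import Mathlib

noncomputable section
attribute [local instance] Classical.propDecidable
open Pointwise


/-! ### Generalities on smooth representations over a commutative ring `o` -/

section RepPrelim

variable (o : Type) [CommRing o]

/-- The `o`-submodule of `V` generated by `{s • w | s ∈ S, w ∈ W}`; written `<S W>` in the paper. -/
def gspan {H : Type} (V : Type) [AddCommGroup V] [Module o V] [SMul H V]
    (S : Set H) (W : Set V) : Submodule o V :=
  Submodule.span o {v : V | ∃ s ∈ S, ∃ w ∈ W, v = s • w}

/-- A submodule `N` is stable under the set `S` of group elements. -/
def IsStableSub {H : Type} (V : Type) [AddCommGroup V] [Module o V] [SMul H V]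
    (S : Set H) (N : Submodule o V) : Prop :=
  ∀ s ∈ S, ∀ v ∈ N, s • v ∈ N

/-- `N` is a finitely generated module over `o[S]`. -/
def IsFGOver {H : Type} (V : Type) [AddCommGroup V] [Module o V] [SMul H V]
    (S : Set H) (N : Submodule o V) : Prop :=
  ∃ X : Finset V, (X : Set V) ⊆ (N : Set V) ∧ N = gspan o V S (X : Set V)

/-- The submodule of `S`-invariants. -/
def invariantsSub (H : Type) [Group H] (V : Type) [AddCommGroup V] [Module o V]
    [DistribMulAction H V] [SMulCommClass H o V] (S : Set H) : Submodule o V where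
  carrier := {v | ∀ s ∈ S, s • v = v}
  add_mem' := by intro a b ha hb s hs; rw [smul_add, ha s hs, hb s hs]
  zero_mem' := by intro s hs; exact smul_zero s
  smul_mem' := by intro c v hv s hs; rw [smul_comm, hv s hs]

/-- The action of a fixed group element as an `o`-linear map. -/
def actLin (H : Type) [Group H] (V : Type) [AddCommGroup V] [Module o V]
    [DistribMulAction H V] [SMulCommClass H o V] (g : H) : V →ₗ[o] V where
  toFun v := g • v
  map_add' := smul_add g
  map_smul' c v := by simpa using smul_comm g c v

/-- `V` has finite length as an `o[H]`-module: it admits a composition series of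
`H`-stable `o`-submodules. -/
def IsFiniteLengthRep (H : Type) [Group H] (V : Type) [AddCommGroup V] [Module o V]
    [DistribMulAction H V] : Prop :=
  ∃ (n : ℕ) (c : Fin (n + 1) → Submodule o V),
    c 0 = ⊥ ∧ c (Fin.last n) = ⊤ ∧
    (∀ i, IsStableSub o V (Set.univ : Set H) (c i)) ∧
    (∀ i : Fin n, c i.castSucc < c i.succ) ∧
    (∀ i : Fin n, ∀ N : Submodule o V, IsStableSub o V (Set.univ : Set H) N →
      c i.castSucc ≤ N → N ≤ c i.succ → N = c i.castSucc ∨ N = c i.succ)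

/-- Smoothness: each vector has open stabilizer. -/
def IsSmoothRep (H : Type) [Group H] [TopologicalSpace H] (V : Type) [AddCommGroup V]
    [Module o V] [DistribMulAction H V] : Prop :=
  ∀ v : V, IsOpen {h : H | h • v = v}

/-- Admissibility: invariants under any compact open subgroup form a f.g. `o`-module. -/
def IsAdmissibleRep (H : Type) [Group H] [TopologicalSpace H] (V : Type) [AddCommGroup V]
    [Module o V] [DistribMulAction H V] [SMulCommClass H o V] : Prop :=
  ∀ H' : Subgroup H, IsCompact (H' : Set H) → IsOpen (H' : Set H) →
    (invariantsSub o H V (H' : Set H)).FG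

end RepPrelim

/-! ### Compact induction `ind_{S}^{H}(V₀)` and finite presentations -/

section Induction

variable (o : Type) [CommRing o]
variable {H : Type} [Group H] {V : Type} [AddCommGroup V] [Module o V]
variable [DistribMulAction H V] [SMulCommClass H o V]

/-- The compact induction `ind_S^H (V₀)`, realized as the `o`-module of functions
`f : H → V` with values in `V₀`, satisfying `f (s * h) = s • f h` for `s ∈ S`, and
supported on finitely many right cosets `S * x`. -/
def Ind (S : Subgroup H) (V0 : Submodule o V) : Submodule o (H → V) where
  carrier := {f | (∀ h, f h ∈ V0) ∧ (∀ s ∈ S, ∀ h, f (s * h) = s • f h) ∧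
      ∃ X : Finset H, ∀ h, f h ≠ 0 → ∃ s ∈ S, ∃ x ∈ X, h = s * x}
  add_mem' := by
    rintro f g ⟨hf1, hf2, Xf, hXf⟩ ⟨hg1, hg2, Xg, hXg⟩
    refine ⟨fun h => V0.add_mem (hf1 h) (hg1 h),
      fun s hs h => by simp only [Pi.add_apply, hf2 s hs h, hg2 s hs h, smul_add],
      Xf ∪ Xg, fun h hh => ?_⟩
    by_cases hf : f h = 0
    · have hg : g h ≠ 0 := fun h0 => hh (by simp [Pi.add_apply, hf, h0])
      obtain ⟨s, hs, x, hx, hxx⟩ := hXg h hg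
      exact ⟨s, hs, x, Finset.mem_union_right _ hx, hxx⟩
    · obtain ⟨s, hs, x, hx, hxx⟩ := hXf h hf
      exact ⟨s, hs, x, Finset.mem_union_left _ hx, hxx⟩
  zero_mem' :=
    ⟨fun _ => V0.zero_mem, fun s _ _ => (smul_zero s).symm, ∅, fun h hh => absurd rfl hh⟩
  smul_mem' := by
    rintro c f ⟨hf1, hf2, Xf, hXf⟩
    refine ⟨fun h => V0.smul_mem c (hf1 h),
      fun s hs h => by
        simp only [Pi.smul_apply, hf2 s hs h]
        exact (smul_comm s c (f h)).symm,
      Xf, fun h hh => hXf h (fun h0 => hh (by simp [Pi.smul_apply, h0]))⟩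

variable {S : Subgroup H} {V0 : Submodule o V}

/-- Right translation, giving the `H`-action on the compact induction. -/
def indTrans (g : H) (f : H → V) : H → V := fun h => f (h * g)

lemma indTrans_mem (g : H) {f : H → V} (hf : f ∈ Ind o S V0) : indTrans g f ∈ Ind o S V0 := by
  obtain ⟨h1, h2, X, hX⟩ := hf
  refine ⟨fun h => h1 _, fun s hs h => by
      simpa [indTrans, mul_assoc] using h2 s hs (h * g),
    X.image (· * g⁻¹), fun h hh => ?_⟩
  obtain ⟨s, hs, x, hx, hxx⟩ := hX (h * g) hh
  refine ⟨s, hs, x * g⁻¹, Finset.mem_image_of_mem _ hx, ?_⟩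
  rw [← mul_assoc, ← hxx, mul_assoc, mul_inv_cancel, mul_one]

instance : SMul H (Ind o S V0) :=
  ⟨fun g f => ⟨indTrans g (f : H → V), indTrans_mem o g f.2⟩⟩

lemma ind_smul_apply (g : H) (f : Ind o S V0) (h : H) :
    ((g • f : Ind o S V0) : H → V) h = (f : H → V) (h * g) := rfl

instance : MulAction H (Ind o S V0) where
  one_smul f := Subtype.ext (funext fun h => by simp [ind_smul_apply])
  mul_smul g1 g2 f := Subtype.ext (funext fun h => by simp [ind_smul_apply, mul_assoc])

instance : DistribMulAction H (Ind o S V0) where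
  smul_add g f1 f2 := Subtype.ext (funext fun h => rfl)
  smul_zero g := Subtype.ext (funext fun h => rfl)

instance : SMulCommClass H o (Ind o S V0) :=
  ⟨fun g c f => Subtype.ext (funext fun h => rfl)⟩

/-- The function `[1, v]` supported on `S`, with value `v` at `1`. -/
def unitFn (S : Subgroup H) (v : V) : H → V := fun h => if h ∈ S then h • v else 0

lemma unitFn_mem (hst : IsStableSub o V (S : Set H) V0) {v : V} (hv : v ∈ V0) :
    unitFn S v ∈ Ind o S V0 := by
  refine ⟨fun h => ?_, fun s hs h => ?_, {1}, fun h hh => ?_⟩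
  · by_cases h1 : h ∈ S
    · simpa [unitFn, h1] using hst h h1 v hv
    · simp [unitFn, h1, V0.zero_mem]
  · by_cases h1 : h ∈ S
    · have hsh : s * h ∈ S := S.mul_mem hs h1
      simp [unitFn, h1, hsh, mul_smul]
    · have hsh : s * h ∉ S := fun hc => h1 (by simpa using S.mul_mem (S.inv_mem hs) hc)
      simp [unitFn, h1, hsh]
  · by_cases h1 : h ∈ S
    · exact ⟨h, h1, 1, Finset.mem_singleton_self 1, (mul_one h).symm⟩
    · simp [unitFn, h1] at hh

/-- The element `[1, v]` of the compact induction. -/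
def unitElt (hst : IsStableSub o V (S : Set H) V0) {v : V} (hv : v ∈ V0) : Ind o S V0 :=
  ⟨unitFn S v, unitFn_mem o hst hv⟩

/-- `P` is the natural presentation map `ind_S^H (V₀) → V`: it is `H`-equivariant and sends
`[1, v]` to `v`. -/
def IsPresMap (hst : IsStableSub o V (S : Set H) V0) (P : Ind o S V0 →ₗ[o] V) : Prop :=
  (∀ (g : H) (f : Ind o S V0), P (g • f) = g • P f) ∧
  (∀ v (hv : v ∈ V0), P (unitElt o hst hv) = v)

end Induction

/-- `V₀ ⊆ V` yields a finite presentation `ind_S^H (V₀) → V`: `V₀` is an `S`-stable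
`o`-submodule, finitely generated over `o[S]`, generating `V` over `o[H]`, and the kernel of
the natural presentation map is finitely generated over `o[H]`. -/
def FinitelyPresentedVia (o : Type) [CommRing o] {H : Type} [Group H] {V : Type}
    [AddCommGroup V] [Module o V] [DistribMulAction H V] [SMulCommClass H o V]
    (S : Subgroup H) (V0 : Submodule o V) : Prop :=
  ∃ hst : IsStableSub o V (S : Set H) V0,
    IsFGOver o V (S : Set H) V0 ∧ gspan o V (Set.univ : Set H) (V0 : Set V) = ⊤ ∧
    ∃ P : Ind o S V0 →ₗ[o] V, IsPresMap o hst P ∧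
      IsFGOver o (Ind o S V0) (Set.univ : Set H) (LinearMap.ker P)

/-- `V` is of finite presentation relative to the open subgroup `S`. -/
def HasFinitePres (o : Type) [CommRing o] {H : Type} [Group H] (V : Type)
    [AddCommGroup V] [Module o V] [DistribMulAction H V] [SMulCommClass H o V]
    (S : Subgroup H) : Prop :=
  ∃ V0 : Submodule o V, FinitelyPresentedVia o S V0


/-! ### The group `GL(2,F)` over a nonarchimedean local field `F` -/

open Matrix

/-- Bundle of data making the field `F` a nonarchimedean local field: the valuation
ring `O`, a uniformizer `ϖ` generating the maximal ideal, finiteness of the residue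
field, compatibility of the topology with the valuation, and local compactness
(equivalently, completeness). -/
structure NALF (F : Type) [Field F] [TopologicalSpace F] [IsTopologicalRing F] where
  O : Subring F
  isValRing : ∀ x : F, x ≠ 0 → x ∈ O ∨ x⁻¹ ∈ O
  ϖ : F
  ϖ_mem : ϖ ∈ O
  ϖ_ne_zero : ϖ ≠ 0
  ϖ_not_unit : ϖ⁻¹ ∉ O
  ϖ_gen : ∀ x ∈ O, x⁻¹ ∉ O → x / ϖ ∈ O
  residue_finite : Finite (↥O ⧸ Ideal.span {(⟨ϖ, ϖ_mem⟩ : ↥O)})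
  nhds_zero : ∀ s : Set F, s ∈ nhds (0 : F) ↔ ∃ n : ℕ, {x : F | ∃ y ∈ O, x = ϖ ^ n * y} ⊆ s
  locallyCompact : LocallyCompactSpace F

variable (F : Type) [Field F]

lemma GL2.inv_entry_ne (g : GL (Fin 2) F)
    (hg : (g : Matrix (Fin 2) (Fin 2) F) 1 0 = 0) :
    ((g⁻¹ : GL (Fin 2) F) : Matrix (Fin 2) (Fin 2) F) 1 0 = 0 := by
  have hAC : (g : Matrix (Fin 2) (Fin 2) F) * ((g⁻¹ : GL (Fin 2) F) : Matrix (Fin 2) (Fin 2) F)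
      = 1 := by
    rw [← Units.val_mul, mul_inv_cancel, Units.val_one]
  have h1 : ((g : Matrix (Fin 2) (Fin 2) F) *
      ((g⁻¹ : GL (Fin 2) F) : Matrix (Fin 2) (Fin 2) F)) 1 0 = 0 := by
    rw [hAC]; exact Matrix.one_apply_ne (by decide)
  have h2 : ((g : Matrix (Fin 2) (Fin 2) F) *
      ((g⁻¹ : GL (Fin 2) F) : Matrix (Fin 2) (Fin 2) F)) 1 1 = 1 := by
    rw [hAC]; exact Matrix.one_apply_eq 1
  rw [Matrix.mul_apply, Fin.sum_univ_two, hg, zero_mul, zero_add] at h1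
  rw [Matrix.mul_apply, Fin.sum_univ_two, hg, zero_mul, zero_add] at h2
  rcases mul_eq_zero.mp h1 with h | h
  · exact absurd h2 (by rw [h, zero_mul]; exact zero_ne_one)
  · exact h

/-- The upper triangular (Borel) subgroup `B ⊆ GL(2,F)`. -/
def Bgr : Subgroup (GL (Fin 2) F) where
  carrier := {g | (g : Matrix (Fin 2) (Fin 2) F) 1 0 = 0}
  one_mem' := by
    show ((1 : GL (Fin 2) F) : Matrix (Fin 2) (Fin 2) F) 1 0 = 0
    rw [Units.val_one]; exact Matrix.one_apply_ne (by decide)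
  mul_mem' := by
    intro a b ha hb
    show ((a * b : GL (Fin 2) F) : Matrix (Fin 2) (Fin 2) F) 1 0 = 0
    rw [Units.val_mul, Matrix.mul_apply, Fin.sum_univ_two]
    simp only [Set.mem_setOf_eq] at ha hb
    rw [ha, hb, zero_mul, mul_zero, add_zero]
  inv_mem' := by
    intro a ha
    exact GL2.inv_entry_ne F a ha

/-- The maximal compact subgroup `K = GL(2, O_F)` of `GL(2,F)`. -/
def Kgr (O : Subring F) : Subgroup (GL (Fin 2) F) where
  carrier := {g | (∀ i j, (g : Matrix (Fin 2) (Fin 2) F) i j ∈ O) ∧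
      (∀ i j, ((g⁻¹ : GL (Fin 2) F) : Matrix (Fin 2) (Fin 2) F) i j ∈ O)}
  one_mem' := by
    constructor <;>
    · intro i j
      simp only [inv_one, Units.val_one]
      by_cases h : i = j
      · rw [h, Matrix.one_apply_eq]; exact O.one_mem
      · rw [Matrix.one_apply_ne h]; exact O.zero_mem
  mul_mem' := by
    rintro a b ⟨ha1, ha2⟩ ⟨hb1, hb2⟩
    constructor
    · intro i j
      rw [Units.val_mul, Matrix.mul_apply]
      exact Subring.sum_mem O fun k _ => O.mul_mem (ha1 i k) (hb1 k j)
    · intro i j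
      rw [_root_.mul_inv_rev, Units.val_mul, Matrix.mul_apply]
      exact Subring.sum_mem O fun k _ => O.mul_mem (hb2 i k) (ha2 k j)
  inv_mem' := by
    rintro a ⟨ha1, ha2⟩
    refine ⟨ha2, ?_⟩
    rw [inv_inv]
    exact ha1

/-- For a subgroup `A` of a group `G`, the subgroup `A · Z(G)`. -/
def centMul {G : Type} [Group G] (A : Subgroup G) : Subgroup G where
  carrier := {g | ∃ a ∈ A, ∃ z ∈ Subgroup.center G, g = a * z}
  one_mem' := ⟨1, A.one_mem, 1, (Subgroup.center G).one_mem, (one_mul 1).symm⟩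
  mul_mem' := by
    rintro x y ⟨a, ha, z, hz, rfl⟩ ⟨a', ha', z', hz', rfl⟩
    refine ⟨a * a', A.mul_mem ha ha', z * z', (Subgroup.center G).mul_mem hz hz', ?_⟩
    have hcz : a' * z = z * a' := Subgroup.mem_center_iff.mp hz a'
    calc a * z * (a' * z') = a * (z * a' * z') := by
          rw [mul_assoc]; rw [mul_assoc z a' z']
      _ = a * (a' * z * z') := by rw [← hcz]
      _ = a * a' * (z * z') := by rw [mul_assoc a a']; rw [mul_assoc a' z z']
  inv_mem' := by
    rintro x ⟨a, ha, z, hz, rfl⟩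
    refine ⟨a⁻¹, A.inv_mem ha, z⁻¹, (Subgroup.center G).inv_mem hz, ?_⟩
    rw [_root_.mul_inv_rev]
    exact (Subgroup.mem_center_iff.mp ((Subgroup.center G).inv_mem hz) a⁻¹).symm

variable [TopologicalSpace F] [IsTopologicalRing F] (L : NALF F)

/-- The element `t = diag(ϖ, 1)`. -/
def tGL : GL (Fin 2) F :=
  Matrix.GeneralLinearGroup.mkOfDetNeZero !![L.ϖ, 0; 0, 1]
    (by rw [Matrix.det_fin_two_of]; simpa using L.ϖ_ne_zero)

lemma tGL_val : (tGL F L : Matrix (Fin 2) (Fin 2) F) = !![L.ϖ, 0; 0, 1] := rfl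

/-- The unipotent element `u(x) = (1 x; 0 1)`. -/
def uGL (x : F) : GL (Fin 2) F :=
  Matrix.GeneralLinearGroup.mkOfDetNeZero !![1, x; 0, 1]
    (by rw [Matrix.det_fin_two_of]; simp)

lemma uGL_val (x : F) : (uGL F x : Matrix (Fin 2) (Fin 2) F) = !![1, x; 0, 1] := rfl

/-- The element `ω = (0 1; ϖ 0)`. -/
def ωGL : GL (Fin 2) F :=
  Matrix.GeneralLinearGroup.mkOfDetNeZero !![0, 1; L.ϖ, 0]
    (by rw [Matrix.det_fin_two_of]; simpa using L.ϖ_ne_zero)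

lemma ωGL_val : (ωGL F L : Matrix (Fin 2) (Fin 2) F) = !![0, 1; L.ϖ, 0] := rfl

/-- `B₀ = B ∩ K`: integral upper triangular matrices with unit diagonal. -/
def B0gr : Subgroup (GL (Fin 2) F) := Bgr F ⊓ Kgr F L.O

/-- The subgroup `KZ`. -/
def KZgr : Subgroup (GL (Fin 2) F) := centMul (Kgr F L.O)

/-- The subgroup `B₀Z`. -/
def B0Zgr : Subgroup (GL (Fin 2) F) := centMul (B0gr F L)

/-- The monoid `B⁺ = ⋃ₙ B₀ Z tⁿ`, as a subset of `GL(2,F)`. -/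
def BplusGL : Set (GL (Fin 2) F) :=
  {g | ∃ b ∈ B0Zgr F L, ∃ n : ℕ, g = b * (tGL F L) ^ n}

lemma tGL_mem_Bgr : tGL F L ∈ Bgr F := by
  show (tGL F L : Matrix (Fin 2) (Fin 2) F) 1 0 = 0
  rw [tGL_val]
  simp

lemma uGL_mem_Bgr (x : F) : uGL F x ∈ Bgr F := by
  show (uGL F x : Matrix (Fin 2) (Fin 2) F) 1 0 = 0
  rw [uGL_val]
  simp

/-- `t` as an element of `B`. -/
def tB : ↥(Bgr F) := ⟨tGL F L, tGL_mem_Bgr F L⟩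

/-- `u(x)` as an element of `B`. -/
def uB (x : F) : ↥(Bgr F) := ⟨uGL F x, uGL_mem_Bgr F x⟩

/-- The monoid `B⁺` as a subset of `B`. -/
def BplusB : Set ↥(Bgr F) := {b | (b : GL (Fin 2) F) ∈ BplusGL F L}

/-- The subgroup `B₀Z` of `B`. -/
def B0Zb : Subgroup ↥(Bgr F) := (B0Zgr F L).comap (Bgr F).subtype

/-- The subgroup `B ∩ KZ` of `B`. -/
def BcapKZb : Subgroup ↥(Bgr F) := (KZgr F L).comap (Bgr F).subtype

/-- The compact group `U₀ = U(O_F)` of integral upper unipotent matrices, as a subset. -/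
def U0set : Set (GL (Fin 2) F) :=
  {g | (g : Matrix (Fin 2) (Fin 2) F) 0 0 = 1 ∧ (g : Matrix (Fin 2) (Fin 2) F) 1 1 = 1 ∧
    (g : Matrix (Fin 2) (Fin 2) F) 1 0 = 0 ∧ (g : Matrix (Fin 2) (Fin 2) F) 0 1 ∈ L.O}

/-- `U_m = U(p_F^m O_F)`, as a subset of `GL(2,F)`. -/
def UmSet (m : ℕ) : Set (GL (Fin 2) F) :=
  {g | (g : Matrix (Fin 2) (Fin 2) F) 0 0 = 1 ∧ (g : Matrix (Fin 2) (Fin 2) F) 1 1 = 1 ∧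
    (g : Matrix (Fin 2) (Fin 2) F) 1 0 = 0 ∧
    ∃ y ∈ L.O, (g : Matrix (Fin 2) (Fin 2) F) 0 1 = L.ϖ ^ m * y}

/-- `U_m⁻ = U⁻(p_F^m O_F)`, the lower unipotent congruence subgroups, as a subset. -/
def UmMinusSet (m : ℕ) : Set (GL (Fin 2) F) :=
  {g | (g : Matrix (Fin 2) (Fin 2) F) 0 0 = 1 ∧ (g : Matrix (Fin 2) (Fin 2) F) 1 1 = 1 ∧
    (g : Matrix (Fin 2) (Fin 2) F) 0 1 = 0 ∧
    ∃ y ∈ L.O, (g : Matrix (Fin 2) (Fin 2) F) 1 0 = L.ϖ ^ m * y}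

/-- `T₀ = T(O_F)`: diagonal matrices with unit entries in `O_F`, as a subset. -/
def T0set : Set (GL (Fin 2) F) :=
  {g | (g : Matrix (Fin 2) (Fin 2) F) 1 0 = 0 ∧ (g : Matrix (Fin 2) (Fin 2) F) 0 1 = 0 ∧
    (g : Matrix (Fin 2) (Fin 2) F) 0 0 ∈ L.O ∧ ((g : Matrix (Fin 2) (Fin 2) F) 0 0)⁻¹ ∈ L.O ∧
    (g : Matrix (Fin 2) (Fin 2) F) 1 1 ∈ L.O ∧ ((g : Matrix (Fin 2) (Fin 2) F) 1 1)⁻¹ ∈ L.O}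

/-- The Iwahori subgroup `I ⊆ K`, as a subset: integral matrices whose reduction is
upper triangular. -/
def Iset : Set (GL (Fin 2) F) :=
  {g | g ∈ Kgr F L.O ∧ ∃ y ∈ L.O, (g : Matrix (Fin 2) (Fin 2) F) 1 0 = L.ϖ * y}

/-- The pro-`p` Iwahori subgroup `I₁ ⊆ I`, as a subset: integral matrices whose
reduction is upper unipotent. -/
def I1set : Set (GL (Fin 2) F) :=
  {g | g ∈ Kgr F L.O ∧ (∃ y ∈ L.O, (g : Matrix (Fin 2) (Fin 2) F) 1 0 = L.ϖ * y) ∧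
    (∃ y ∈ L.O, (g : Matrix (Fin 2) (Fin 2) F) 0 0 - 1 = L.ϖ * y) ∧
    (∃ y ∈ L.O, (g : Matrix (Fin 2) (Fin 2) F) 1 1 - 1 = L.ϖ * y)}

/-- The set `IZ`. -/
def IZset : Set (GL (Fin 2) F) :=
  {g | ∃ i ∈ Iset F L, ∃ z ∈ Subgroup.center (GL (Fin 2) F), g = i * z}

/-- The set `ωIZ`. -/
def ωIZset : Set (GL (Fin 2) F) := {g | ∃ h ∈ IZset F L, g = ωGL F L * h}

/-! ### Valuation lemmas -/

section ValLemmas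

lemma NALF.pow_mul_eq_zero (x : F) (hx : ∀ n : ℕ, ∃ y ∈ L.O, x = L.ϖ ^ n * y) : x = 0 := by
  by_contra hx0
  have hcont : Filter.Tendsto (fun y : F => x⁻¹ * y) (nhds 0) (nhds 0) := by
    have h := Filter.Tendsto.const_mul (x⁻¹) (Filter.tendsto_id (x := nhds (0 : F)))
    simpa using h
  have hU : {z : F | ∃ y ∈ L.O, z = L.ϖ * y} ∈ nhds (0 : F) := by
    rw [L.nhds_zero]
    exact ⟨1, fun z hz => by obtain ⟨y, hy, hzy⟩ := hz; exact ⟨y, hy, by rw [hzy, pow_one]⟩⟩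
  have hpre := hcont hU
  rw [Filter.mem_map, L.nhds_zero] at hpre
  obtain ⟨n, hn⟩ := hpre
  have hxmem : x ∈ {z : F | ∃ y ∈ L.O, z = L.ϖ ^ n * y} := by
    obtain ⟨y, hy, hxy⟩ := hx n
    exact ⟨y, hy, hxy⟩
  have h1 : x⁻¹ * x ∈ {z : F | ∃ y ∈ L.O, z = L.ϖ * y} := hn hxmem
  rw [inv_mul_cancel₀ hx0] at h1
  obtain ⟨y, hy, h1y⟩ := h1
  have : L.ϖ⁻¹ = y := inv_eq_of_mul_eq_one_right h1y.symm
  exact L.ϖ_not_unit (this ▸ hy)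

lemma NALF.exists_unit_mul_pow {x : F} (hx : x ∈ L.O) (hx0 : x ≠ 0) :
    ∃ (n : ℕ) (u : F), u ∈ L.O ∧ u⁻¹ ∈ L.O ∧ x = u * L.ϖ ^ n := by
  by_contra hcon
  push_neg at hcon
  have key : ∀ n : ℕ, ∃ y ∈ L.O, x = L.ϖ ^ n * y := by
    intro n
    induction n with
    | zero => exact ⟨x, hx, by rw [pow_zero, one_mul]⟩
    | succ n ih =>
      obtain ⟨y, hy, hxy⟩ := ih
      have hy0 : y ≠ 0 := fun h => hx0 (by rw [hxy, h, mul_zero])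
      have hyinv : y⁻¹ ∉ L.O := by
        intro hyi
        exact hcon n y hy hyi (by rw [hxy, mul_comm])
      refine ⟨y / L.ϖ, L.ϖ_gen y hy hyinv, ?_⟩
      rw [hxy, pow_succ, mul_assoc, mul_comm L.ϖ (y / L.ϖ), div_mul_cancel₀ y L.ϖ_ne_zero]
  exact hx0 (NALF.pow_mul_eq_zero F L x key)

lemma NALF.exists_shift (x : F) (hx0 : x ≠ 0) :
    ∃ (m n : ℕ) (u : F), u ∈ L.O ∧ u⁻¹ ∈ L.O ∧ L.ϖ ^ m * x = u * L.ϖ ^ n := by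
  by_cases hx : x ∈ L.O
  · obtain ⟨n, u, h1, h2, h3⟩ := NALF.exists_unit_mul_pow F L hx hx0
    exact ⟨0, n, u, h1, h2, by rw [pow_zero, one_mul, h3]⟩
  · have hxi : x⁻¹ ∈ L.O := (L.isValRing x hx0).resolve_left hx
    obtain ⟨n, u, h1, h2, h3⟩ := NALF.exists_unit_mul_pow F L hxi (inv_ne_zero hx0)
    refine ⟨n, 0, u⁻¹, h2, by rwa [inv_inv], ?_⟩
    rw [pow_zero, mul_one]
    have hxu : x * (u * L.ϖ ^ n) = 1 := by rw [← h3]; exact mul_inv_cancel₀ hx0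
    have : u * (L.ϖ ^ n * x) = 1 := by rw [← hxu]; ring
    exact (inv_eq_of_mul_eq_one_right this).symm

lemma NALF.exists_pow_mul_mem (x : F) : ∃ m : ℕ, L.ϖ ^ m * x ∈ L.O := by
  by_cases hx0 : x = 0
  · exact ⟨0, by rw [hx0, mul_zero]; exact L.O.zero_mem⟩
  · obtain ⟨m, n, u, h1, _, h3⟩ := NALF.exists_shift F L x hx0
    exact ⟨m, by rw [h3]; exact L.O.mul_mem h1 (L.O.pow_mem L.ϖ_mem n)⟩

end ValLemmas

/-! ### Group lemmas on `B`, `B₀Z`, `B⁺` -/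

section GroupLemmas

lemma tGL_inv_val : (((tGL F L)⁻¹ : GL (Fin 2) F) : Matrix (Fin 2) (Fin 2) F)
    = !![L.ϖ⁻¹, 0; 0, 1] := by
  have h1 : (tGL F L : Matrix (Fin 2) (Fin 2) F) * !![L.ϖ⁻¹, 0; 0, 1] = 1 := by
    rw [tGL_val, Matrix.mul_fin_two, Matrix.one_fin_two]
    simp [mul_inv_cancel₀ L.ϖ_ne_zero]
  calc (((tGL F L)⁻¹ : GL (Fin 2) F) : Matrix (Fin 2) (Fin 2) F)
      = (((tGL F L)⁻¹ : GL (Fin 2) F) : Matrix (Fin 2) (Fin 2) F) *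
        ((tGL F L : Matrix (Fin 2) (Fin 2) F) * !![L.ϖ⁻¹, 0; 0, 1]) := by rw [h1, mul_one]
    _ = (((tGL F L)⁻¹ * tGL F L : GL (Fin 2) F) : Matrix (Fin 2) (Fin 2) F) *
        !![L.ϖ⁻¹, 0; 0, 1] := by rw [Units.val_mul, mul_assoc]
    _ = !![L.ϖ⁻¹, 0; 0, 1] := by rw [inv_mul_cancel, Units.val_one, one_mul]

lemma tGL_pow_val (n : ℕ) : (((tGL F L) ^ n : GL (Fin 2) F) : Matrix (Fin 2) (Fin 2) F)
    = !![L.ϖ ^ n, 0; 0, 1] := by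
  induction n with
  | zero => rw [pow_zero, pow_zero, Units.val_one, Matrix.one_fin_two]
  | succ n ih =>
    rw [pow_succ, Units.val_mul, ih, tGL_val, Matrix.mul_fin_two]
    simp [pow_succ]

/-- The scalar matrix `λ·1` as an element of `GL(2,F)`. -/
def scalGL (lam : F) (h : lam ≠ 0) : GL (Fin 2) F :=
  ⟨lam • 1, lam⁻¹ • 1,
    by rw [smul_mul_assoc, one_mul, smul_smul, mul_inv_cancel₀ h, one_smul],
    by rw [smul_mul_assoc, one_mul, smul_smul, inv_mul_cancel₀ h, one_smul]⟩

lemma scalGL_val (lam : F) (h : lam ≠ 0) :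
    ((scalGL F lam h : GL (Fin 2) F) : Matrix (Fin 2) (Fin 2) F) = lam • 1 := rfl

lemma scalGL_center (lam : F) (h : lam ≠ 0) :
    scalGL F lam h ∈ Subgroup.center (GL (Fin 2) F) := by
  rw [Subgroup.mem_center_iff]
  intro g
  apply Units.ext
  rw [Units.val_mul, Units.val_mul, scalGL_val, mul_smul_comm, smul_mul_assoc,
    mul_one, one_mul]

lemma conj_val (g : GL (Fin 2) F) :
    ((tGL F L * g * (tGL F L)⁻¹ : GL (Fin 2) F) : Matrix (Fin 2) (Fin 2) F) =
    !![(g : Matrix (Fin 2) (Fin 2) F) 0 0, L.ϖ * (g : Matrix (Fin 2) (Fin 2) F) 0 1;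
       (g : Matrix (Fin 2) (Fin 2) F) 1 0 * L.ϖ⁻¹, (g : Matrix (Fin 2) (Fin 2) F) 1 1] := by
  have hϖ := L.ϖ_ne_zero
  rw [Units.val_mul, Units.val_mul, tGL_val, tGL_inv_val,
    Matrix.eta_fin_two ((g : GL (Fin 2) F) : Matrix (Fin 2) (Fin 2) F),
    Matrix.mul_fin_two, Matrix.mul_fin_two]
  ext i j
  fin_cases i <;> fin_cases j <;> simp <;> (try field_simp [hϖ]) <;> (try ring)

lemma conj_mem_B0gr {g : GL (Fin 2) F} (hg : g ∈ B0gr F L) :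
    tGL F L * g * (tGL F L)⁻¹ ∈ B0gr F L := by
  rw [B0gr, Subgroup.mem_inf] at hg ⊢
  obtain ⟨hB, hK⟩ := hg
  have hB10 : (g : Matrix (Fin 2) (Fin 2) F) 1 0 = 0 := hB
  have hB10' : ((g⁻¹ : GL (Fin 2) F) : Matrix (Fin 2) (Fin 2) F) 1 0 = 0 :=
    GL2.inv_entry_ne F g hB10
  have hinv : (tGL F L * g * (tGL F L)⁻¹)⁻¹ = tGL F L * g⁻¹ * (tGL F L)⁻¹ := by group
  refine ⟨?_, ?_, ?_⟩
  · show ((tGL F L * g * (tGL F L)⁻¹ : GL (Fin 2) F) : Matrix (Fin 2) (Fin 2) F) 1 0 = 0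
    rw [conj_val]
    simp [hB10]
  · intro i j
    rw [conj_val]
    fin_cases i <;> fin_cases j <;> simp [hB10] <;>
      first
        | exact hK.1 0 0
        | exact L.O.mul_mem L.ϖ_mem (hK.1 0 1)
        | exact hK.1 1 1
        | exact Subring.zero_mem _
  · intro i j
    rw [hinv, conj_val]
    have hcoe : ((g⁻¹ : GL (Fin 2) F) : Matrix (Fin 2) (Fin 2) F)
        = ((g : Matrix (Fin 2) (Fin 2) F))⁻¹ := Matrix.coe_units_inv g
    have hK2' : ∀ i j, ((g : Matrix (Fin 2) (Fin 2) F))⁻¹ i j ∈ L.O := by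
      intro i j; rw [← hcoe]; exact hK.2 i j
    have hB10'' : ((g : Matrix (Fin 2) (Fin 2) F))⁻¹ 1 0 = 0 := by rw [← hcoe]; exact hB10'
    fin_cases i <;> fin_cases j <;> simp [hB10''] <;>
      first
        | exact hK2' 0 0
        | exact L.O.mul_mem L.ϖ_mem (hK2' 0 1)
        | exact hK2' 1 1
        | exact Subring.zero_mem _

lemma conj_mem_B0Zgr {g : GL (Fin 2) F} (hg : g ∈ B0Zgr F L) :
    tGL F L * g * (tGL F L)⁻¹ ∈ B0Zgr F L := by
  obtain ⟨a, ha, z, hz, rfl⟩ := hg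
  refine ⟨tGL F L * a * (tGL F L)⁻¹, conj_mem_B0gr F L ha, z, hz, ?_⟩
  have hcz : (tGL F L)⁻¹ * z = z * (tGL F L)⁻¹ := Subgroup.mem_center_iff.mp hz _
  rw [show tGL F L * (a * z) * (tGL F L)⁻¹ = tGL F L * a * (z * (tGL F L)⁻¹) by group,
    ← hcz]
  group

lemma conj_pow_mem_B0Zgr (n : ℕ) {g : GL (Fin 2) F} (hg : g ∈ B0Zgr F L) :
    (tGL F L) ^ n * g * ((tGL F L) ^ n)⁻¹ ∈ B0Zgr F L := by
  induction n with
  | zero => simpa using hg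
  | succ n ih =>
    have heq : (tGL F L) ^ (n + 1) * g * ((tGL F L) ^ (n + 1))⁻¹
        = tGL F L * ((tGL F L) ^ n * g * ((tGL F L) ^ n)⁻¹) * (tGL F L)⁻¹ := by
      rw [pow_succ' (tGL F L) n, _root_.mul_inv_rev]
      simp only [mul_assoc]
    rw [heq]
    exact conj_mem_B0Zgr F L ih

lemma coe_tB_pow (n : ℕ) : (((tB F L) ^ n : ↥(Bgr F)) : GL (Fin 2) F) = (tGL F L) ^ n := by
  induction n with
  | zero => simp
  | succ n ih => rw [pow_succ, pow_succ, ← ih]; rfl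

lemma mem_BplusB_iff (b : ↥(Bgr F)) :
    b ∈ BplusB F L ↔ ∃ s ∈ B0Zb F L, ∃ n : ℕ, b = s * (tB F L) ^ n := by
  constructor
  · rintro ⟨b', hb', n, heq⟩
    have hb'B : b' ∈ Bgr F := by
      have hb'eq : b' = (b : GL (Fin 2) F) * ((tGL F L) ^ n)⁻¹ := by rw [heq]; group
      rw [hb'eq]
      exact (Bgr F).mul_mem b.2 ((Bgr F).inv_mem ((Bgr F).pow_mem (tGL_mem_Bgr F L) n))
    refine ⟨⟨b', hb'B⟩, hb', n, ?_⟩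
    apply Subtype.ext
    rw [Subgroup.coe_mul, coe_tB_pow]
    exact heq
  · rintro ⟨s, hs, n, rfl⟩
    exact ⟨↑s, hs, n, by rw [Subgroup.coe_mul, coe_tB_pow]⟩

lemma BplusB_mul_left {s b : ↥(Bgr F)} (hs : s ∈ B0Zb F L) (hb : b ∈ BplusB F L) :
    s * b ∈ BplusB F L := by
  rw [mem_BplusB_iff] at hb ⊢
  obtain ⟨s0, hs0, n, rfl⟩ := hb
  exact ⟨s * s0, mul_mem hs hs0, n, by rw [mul_assoc]⟩

lemma tB_conj_mem {s : ↥(Bgr F)} (hs : s ∈ B0Zb F L) (n : ℕ) :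
    (tB F L) ^ n * s * ((tB F L) ^ n)⁻¹ ∈ B0Zb F L := by
  have : (((tB F L) ^ n * s * ((tB F L) ^ n)⁻¹ : ↥(Bgr F)) : GL (Fin 2) F)
      = (tGL F L) ^ n * (s : GL (Fin 2) F) * ((tGL F L) ^ n)⁻¹ := by
    rw [Subgroup.coe_mul, Subgroup.coe_mul, Subgroup.coe_inv, coe_tB_pow]
  show (((tB F L) ^ n * s * ((tB F L) ^ n)⁻¹ : ↥(Bgr F)) : GL (Fin 2) F) ∈ B0Zgr F L
  rw [this]
  exact conj_pow_mem_B0Zgr F L n hs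

lemma BplusB_mul_right {b s : ↥(Bgr F)} (hb : b ∈ BplusB F L) (hs : s ∈ B0Zb F L) :
    b * s ∈ BplusB F L := by
  rw [mem_BplusB_iff] at hb ⊢
  obtain ⟨s0, hs0, n, rfl⟩ := hb
  refine ⟨s0 * ((tB F L) ^ n * s * ((tB F L) ^ n)⁻¹), mul_mem hs0 (tB_conj_mem F L hs n),
    n, by group⟩

lemma tB_mul_BplusB {b : ↥(Bgr F)} (hb : b ∈ BplusB F L) : tB F L * b ∈ BplusB F L := by
  rw [mem_BplusB_iff] at hb ⊢
  obtain ⟨s0, hs0, n, rfl⟩ := hb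
  have h1 : tB F L * s0 * (tB F L)⁻¹ ∈ B0Zb F L := by
    have := tB_conj_mem F L hs0 1
    simpa using this
  exact ⟨tB F L * s0 * (tB F L)⁻¹, h1, n + 1, by rw [pow_succ']; group⟩

lemma tB_pow_mul_BplusB (k : ℕ) {b : ↥(Bgr F)} (hb : b ∈ BplusB F L) :
    (tB F L) ^ k * b ∈ BplusB F L := by
  induction k with
  | zero => simpa using hb
  | succ k ih =>
    rw [pow_succ', mul_assoc]
    exact tB_mul_BplusB F L ih

lemma exists_pow_mem_BplusB (g : ↥(Bgr F)) : ∃ m : ℕ, (tB F L) ^ m * g ∈ BplusB F L := by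
  have hγ10 : ((g : GL (Fin 2) F) : Matrix (Fin 2) (Fin 2) F) 1 0 = 0 := g.2
  have hdetne : ((g : GL (Fin 2) F) : Matrix (Fin 2) (Fin 2) F) 0 0 *
      ((g : GL (Fin 2) F) : Matrix (Fin 2) (Fin 2) F) 1 1 ≠ 0 := by
    have h1 : (((g : GL (Fin 2) F) : Matrix (Fin 2) (Fin 2) F)).det *
        ((((g : GL (Fin 2) F)⁻¹ : GL (Fin 2) F)) : Matrix (Fin 2) (Fin 2) F).det = 1 := by
      rw [← Matrix.det_mul, ← Units.val_mul, mul_inv_cancel, Units.val_one, Matrix.det_one]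
    intro h0
    rw [Matrix.det_fin_two, hγ10, mul_zero, sub_zero, h0, zero_mul] at h1
    exact zero_ne_one h1
  set A := ((g : GL (Fin 2) F) : Matrix (Fin 2) (Fin 2) F) 0 0 with hA
  set X := ((g : GL (Fin 2) F) : Matrix (Fin 2) (Fin 2) F) 0 1 with hX
  set D := ((g : GL (Fin 2) F) : Matrix (Fin 2) (Fin 2) F) 1 1 with hD
  have hAne : A ≠ 0 := fun h => hdetne (by rw [h, zero_mul])
  have hDne : D ≠ 0 := fun h => hdetne (by rw [h, mul_zero])
  obtain ⟨m₁, n₁, u, hu, hui, heq1⟩ := NALF.exists_shift F L (A * D⁻¹)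
    (mul_ne_zero hAne (inv_ne_zero hDne))
  obtain ⟨m₂, hm₂⟩ := NALF.exists_pow_mul_mem F L (X * D⁻¹)
  set β : F := L.ϖ ^ (m₁ + m₂) * (X * D⁻¹) with hβ
  have hβO : β ∈ L.O := by
    rw [hβ, pow_add, mul_assoc]
    exact L.O.mul_mem (L.O.pow_mem L.ϖ_mem m₁) hm₂
  have hu0 : u ≠ 0 := by
    intro h0
    rw [h0, zero_mul] at heq1
    exact (mul_ne_zero (pow_ne_zero m₁ L.ϖ_ne_zero)
      (mul_ne_zero hAne (inv_ne_zero hDne))) heq1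
  -- the unit k
  have hk1 : (!![u, β; 0, 1] : Matrix (Fin 2) (Fin 2) F) * !![u⁻¹, -(u⁻¹ * β); 0, 1] = 1 := by
    rw [Matrix.mul_fin_two, Matrix.one_fin_two]
    ext i j
    fin_cases i <;> fin_cases j <;> simp [hu0] <;> (try field_simp) <;> (try ring)
  have hk2 : (!![u⁻¹, -(u⁻¹ * β); 0, 1] : Matrix (Fin 2) (Fin 2) F) * !![u, β; 0, 1] = 1 := by
    rw [Matrix.mul_fin_two, Matrix.one_fin_two]
    ext i j
    fin_cases i <;> fin_cases j <;> simp [hu0] <;> (try field_simp) <;> (try ring)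
  set k : GL (Fin 2) F := ⟨!![u, β; 0, 1], !![u⁻¹, -(u⁻¹ * β); 0, 1], hk1, hk2⟩ with hkdef
  have hkval : (k : Matrix (Fin 2) (Fin 2) F) = !![u, β; 0, 1] := rfl
  have hkinvval : ((k⁻¹ : GL (Fin 2) F) : Matrix (Fin 2) (Fin 2) F)
      = !![u⁻¹, -(u⁻¹ * β); 0, 1] := rfl
  have hkmem : k ∈ B0gr F L := by
    rw [B0gr, Subgroup.mem_inf]
    refine ⟨?_, ?_, ?_⟩
    · show (k : Matrix (Fin 2) (Fin 2) F) 1 0 = 0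
      rw [hkval]; simp
    · intro i j
      rw [hkval]
      fin_cases i <;> fin_cases j <;> (try simp) <;>
        first
          | exact hu
          | exact hβO
          | exact Subring.zero_mem _
          | exact Subring.one_mem _
    · intro i j
      rw [hkinvval]
      fin_cases i <;> fin_cases j <;> (try simp) <;>
        first
          | exact hui
          | exact L.O.neg_mem (L.O.mul_mem hui hβO)
          | exact L.O.mul_mem hui hβO
          | exact Subring.zero_mem _
          | exact Subring.one_mem _
  have hzmem := scalGL_center F D hDne
  have e1 : L.ϖ ^ (m₁ + m₂) * A = u * D * L.ϖ ^ (n₁ + m₂) := by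
    have h' : L.ϖ ^ m₁ * A = u * L.ϖ ^ n₁ * D := by
      calc L.ϖ ^ m₁ * A = (L.ϖ ^ m₁ * (A * D⁻¹)) * D := by
            field_simp
          _ = u * L.ϖ ^ n₁ * D := by rw [heq1]
    rw [pow_add, pow_add]
    calc L.ϖ ^ m₁ * L.ϖ ^ m₂ * A = (L.ϖ ^ m₁ * A) * L.ϖ ^ m₂ := by ring
      _ = u * L.ϖ ^ n₁ * D * L.ϖ ^ m₂ := by rw [h']
      _ = u * D * (L.ϖ ^ n₁ * L.ϖ ^ m₂) := by ring
  have e2 : L.ϖ ^ (m₁ + m₂) * X = β * D := by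
    rw [hβ]
    field_simp
  have hL : (!![L.ϖ ^ (m₁ + m₂), 0; 0, 1] : Matrix (Fin 2) (Fin 2) F) *
      ((g : GL (Fin 2) F) : Matrix (Fin 2) (Fin 2) F)
      = !![u * D * L.ϖ ^ (n₁ + m₂), β * D; 0, D] := by
    rw [Matrix.eta_fin_two ((g : GL (Fin 2) F) : Matrix (Fin 2) (Fin 2) F),
      Matrix.mul_fin_two, ← hA, ← hX, ← hD, hγ10]
    ext i j
    fin_cases i <;> fin_cases j <;> simp [e1, e2]
  have hR : (!![u, β; 0, 1] : Matrix (Fin 2) (Fin 2) F) * (D • 1) *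
      (!![L.ϖ ^ (n₁ + m₂), 0; 0, 1] : Matrix (Fin 2) (Fin 2) F)
      = !![u * D * L.ϖ ^ (n₁ + m₂), β * D; 0, D] := by
    rw [mul_smul_comm, mul_one, smul_mul_assoc, Matrix.mul_fin_two]
    ext i j
    fin_cases i <;> fin_cases j <;> simp <;> (try ring)
  refine ⟨m₁ + m₂, ?_⟩
  show (((tB F L) ^ (m₁ + m₂) * g : ↥(Bgr F)) : GL (Fin 2) F) ∈ BplusGL F L
  refine ⟨k * scalGL F D hDne, ⟨k, hkmem, scalGL F D hDne, hzmem, rfl⟩, n₁ + m₂, ?_⟩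
  rw [Subgroup.coe_mul, coe_tB_pow]
  apply Units.ext
  rw [Units.val_mul, Units.val_mul, Units.val_mul, tGL_pow_val, tGL_pow_val,
    hkval, scalGL_val, hL, hR]

lemma exists_pow_ge_BplusB (g : ↥(Bgr F)) :
    ∃ m : ℕ, ∀ n ≥ m, (tB F L) ^ n * g ∈ BplusB F L := by
  obtain ⟨m, hm⟩ := exists_pow_mem_BplusB F L g
  refine ⟨m, fun n hn => ?_⟩
  have : (tB F L) ^ n * g = (tB F L) ^ (n - m) * ((tB F L) ^ m * g) := by
    rw [← mul_assoc, ← pow_add, Nat.sub_add_cancel hn]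
  rw [this]
  exact tB_pow_mul_BplusB F L (n - m) hm

end GroupLemmas

/-! ### Abstract restriction machinery on compact inductions -/

section AbstractRest

variable {o : Type} [CommRing o] {H : Type} [Group H]
variable {V : Type} [AddCommGroup V] [Module o V] [DistribMulAction H V] [SMulCommClass H o V]
variable {S : Subgroup H} {V0 : Submodule o V}

/-- Restriction of a function to the locus where `Q` holds. -/
def restFun (Q : H → Prop) (f : H → V) : H → V := fun h => if Q h then f h else 0

lemma restFun_mem {Q : H → Prop} (hQ : ∀ s ∈ S, ∀ h : H, Q (s * h) ↔ Q h)
    {f : H → V} (hf : f ∈ Ind o S V0) : restFun Q f ∈ Ind o S V0 := by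
  obtain ⟨h1, h2, Xf, hXf⟩ := hf
  refine ⟨fun h => ?_, fun s hs h => ?_, Xf, fun h hh => hXf h ?_⟩
  · unfold restFun
    split
    · exact h1 h
    · exact V0.zero_mem
  · show (if Q (s * h) then f (s * h) else 0) = s • if Q h then f h else 0
    rw [hQ s hs h]
    split
    · exact h2 s hs h
    · rw [smul_zero]
  · intro h0
    apply hh
    unfold restFun
    split <;> simp [h0]

/-- Restriction as an `o`-linear endomorphism of the compact induction. -/
def restL (Q : H → Prop) (hQ : ∀ s ∈ S, ∀ h : H, Q (s * h) ↔ Q h) :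
    ↥(Ind o S V0) →ₗ[o] ↥(Ind o S V0) where
  toFun f := ⟨restFun Q (f : H → V), restFun_mem hQ f.2⟩
  map_add' f g := by
    apply Subtype.ext
    funext h
    show (if Q h then ((f : H → V) h + (g : H → V) h) else 0)
        = (if Q h then (f : H → V) h else 0) + (if Q h then (g : H → V) h else 0)
    split
    · rfl
    · rw [add_zero]
  map_smul' c f := by
    apply Subtype.ext
    funext h
    show (if Q h then c • (f : H → V) h else 0) = c • if Q h then (f : H → V) h else 0
    split
    · rfl
    · rw [smul_zero]

/-- The "negative" predicate relative to a subset `Bp`. -/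
def Qneg (Bp : Set H) : H → Prop := fun h => h⁻¹ ∉ Bp

lemma Qneg_inv {Bp : Set H} (hBS : ∀ b ∈ Bp, ∀ s ∈ S, b * s ∈ Bp) :
    ∀ s ∈ S, ∀ h : H, Qneg Bp (s * h) ↔ Qneg Bp h := by
  intro s hs h
  unfold Qneg
  rw [_root_.mul_inv_rev]
  constructor
  · intro hn hmem
    exact hn (hBS _ hmem _ (S.inv_mem hs))
  · intro hn hmem
    apply hn
    have h2 := hBS _ hmem s hs
    rwa [inv_mul_cancel_right] at h2

/-- The coset predicate attached to a finite set `T`. -/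
def QT (S : Subgroup H) (T : Finset H) : H → Prop := fun h => ∃ s ∈ S, ∃ x ∈ T, h = s * x

lemma QT_inv (T : Finset H) :
    ∀ s ∈ S, ∀ h : H, QT S T (s * h) ↔ QT S T h := by
  intro s hs h
  constructor
  · rintro ⟨s', hs', x, hx, heq⟩
    refine ⟨s⁻¹ * s', mul_mem (S.inv_mem hs) hs', x, hx, ?_⟩
    rw [mul_assoc, ← heq, inv_mul_cancel_left]
  · rintro ⟨s', hs', x, hx, rfl⟩
    exact ⟨s * s', mul_mem hs hs', x, hx, (mul_assoc s s' x).symm⟩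

/-- Restriction to the negative part. -/
def restNeg (Bp : Set H) (hBS : ∀ b ∈ Bp, ∀ s ∈ S, b * s ∈ Bp) :
    ↥(Ind o S V0) →ₗ[o] ↥(Ind o S V0) := restL (Qneg Bp) (Qneg_inv hBS)

/-- Restriction to the cosets determined by `T`. -/
def restT (T : Finset H) : ↥(Ind o S V0) →ₗ[o] ↥(Ind o S V0) := restL (QT S T) (QT_inv T)

lemma gspan_stable (S' : Subgroup H) (X : Set V) :
    IsStableSub o V (S' : Set H) (gspan o V (S' : Set H) X) := by
  intro s hs v hv
  unfold gspan at hv ⊢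
  induction hv using Submodule.span_induction with
  | mem w hw =>
    obtain ⟨s', hs', x, hx, rfl⟩ := hw
    exact Submodule.subset_span ⟨s * s', mul_mem hs hs', x, hx, (mul_smul s s' x).symm⟩
  | zero => rw [smul_zero]; exact Submodule.zero_mem _
  | add a b _ _ ha hb => rw [smul_add]; exact Submodule.add_mem _ ha hb
  | smul c a _ ha => rw [smul_comm]; exact Submodule.smul_mem _ c ha

lemma subset_gspan (S' : Subgroup H) (X : Set V) :
    X ⊆ (gspan o V (S' : Set H) X : Set V) := fun x hx =>
  Submodule.subset_span ⟨1, S'.one_mem, x, hx, (one_smul H x).symm⟩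

lemma restNeg_unit_of_mem {Bp : Set H} (hBS : ∀ b ∈ Bp, ∀ s ∈ S, b * s ∈ Bp)
    (hst : IsStableSub o V (S : Set H) V0) {c : H} (hc : c ∈ Bp) {v : V} (hv : v ∈ V0) :
    restNeg Bp hBS (c • unitElt o hst hv) = 0 := by
  apply Subtype.ext
  funext h
  show (if Qneg Bp h then (if h * c ∈ S then (h * c) • v else 0) else 0) = (0 : V)
  split
  next hneg =>
    split
    next hmem =>
      exfalso
      apply hneg
      have hh : h⁻¹ = c * (h * c)⁻¹ := by group
      rw [hh]
      exact hBS c hc _ (S.inv_mem hmem)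
    next _ => rfl
  next _ => rfl

lemma restNeg_unit_of_not_mem {Bp : Set H} (hBS : ∀ b ∈ Bp, ∀ s ∈ S, b * s ∈ Bp)
    (hst : IsStableSub o V (S : Set H) V0) {c : H} (hc : c ∉ Bp) {v : V} (hv : v ∈ V0) :
    restNeg Bp hBS (c • unitElt o hst hv) = c • unitElt o hst hv := by
  apply Subtype.ext
  funext h
  show (if Qneg Bp h then (if h * c ∈ S then (h * c) • v else 0) else 0)
      = (if h * c ∈ S then (h * c) • v else 0)
  split
  next _ => rfl
  next hneg =>
    have hneg' : h⁻¹ ∈ Bp := not_not.mp hneg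
    split
    next hmem =>
      exfalso
      apply hc
      have hh : c = h⁻¹ * (h * c) := by group
      rw [hh]
      exact hBS _ hneg' _ hmem
    next _ => rfl

lemma restNeg_smul_eq {Bp : Set H} (hBS : ∀ b ∈ Bp, ∀ s ∈ S, b * s ∈ Bp)
    (d : H) (ρ : ↥(Ind o S V0)) (X : Finset H)
    (hX : ∀ h : H, (ρ : H → V) h ≠ 0 → ∃ s ∈ S, ∃ x ∈ X, h = s * x) :
    restNeg Bp hBS (d • ρ) = d • restT (X.filter fun x => d * x⁻¹ ∉ Bp) ρ := by
  apply Subtype.ext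
  funext h
  show (if Qneg Bp h then (ρ : H → V) (h * d) else 0)
      = (if QT S (X.filter fun x => d * x⁻¹ ∉ Bp) (h * d) then (ρ : H → V) (h * d) else 0)
  by_cases hz : (ρ : H → V) (h * d) = 0
  · rw [hz]
    simp
  · obtain ⟨s, hs, x, hxX, hdec⟩ := hX (h * d) hz
    have hiff : Qneg Bp h ↔ QT S (X.filter fun x => d * x⁻¹ ∉ Bp) (h * d) := by
      constructor
      · intro hneg
        refine ⟨s, hs, x, ?_, hdec⟩
        rw [Finset.mem_filter]
        refine ⟨hxX, fun hmem => hneg ?_⟩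
        have hh2 : h = s * x * d⁻¹ := by rw [← hdec]; group
        have hh : h⁻¹ = (d * x⁻¹) * s⁻¹ := by rw [hh2]; group
        rw [hh]
        exact hBS _ hmem _ (S.inv_mem hs)
      · rintro ⟨s', hs', x', hx'T, hdec'⟩
        rw [Finset.mem_filter] at hx'T
        intro hmemBp
        apply hx'T.2
        have hh2 : h = s' * x' * d⁻¹ := by rw [← hdec']; group
        have hh : d * x'⁻¹ = h⁻¹ * s' := by rw [hh2]; group
        rw [hh]
        exact hBS _ hmemBp _ hs'
    by_cases hq : Qneg Bp h
    · rw [if_pos hq, if_pos (hiff.mp hq)]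
    · rw [if_neg hq, if_neg fun hc => hq (hiff.mpr hc)]

lemma restT_eq_self (ρ : ↥(Ind o S V0)) (T : Finset H)
    (hT : ∀ h : H, (ρ : H → V) h ≠ 0 → ∃ s ∈ S, ∃ x ∈ T, h = s * x) :
    restT T ρ = ρ := by
  apply Subtype.ext
  funext h
  show (if QT S T h then (ρ : H → V) h else 0) = (ρ : H → V) h
  by_cases hz : (ρ : H → V) h = 0
  · rw [hz]
    simp
  · exact if_pos (hT h hz)

lemma restT_empty (ρ : ↥(Ind o S V0)) (T : Finset H) (hT : T = ∅) :
    restT T ρ = 0 := by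
  apply Subtype.ext
  funext h
  show (if QT S T h then (ρ : H → V) h else 0) = (0 : V)
  rw [if_neg]
  rintro ⟨s, hs, x, hxT, _⟩
  rw [hT] at hxT
  exact absurd hxT (Finset.notMem_empty x)

theorem abstract_main
    {V' : Type} [AddCommGroup V'] [Module o V'] [DistribMulAction H V'] [SMulCommClass H o V']
    (Bp : Set H) (τ : H)
    (hSB : ∀ s ∈ S, ∀ b ∈ Bp, s * b ∈ Bp)
    (hBS : ∀ b ∈ Bp, ∀ s ∈ S, b * s ∈ Bp)
    (hfact : ∀ b ∈ Bp, ∃ s ∈ S, ∃ n : ℕ, b = s * τ ^ n)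
    (hgrow : ∀ g : H, ∃ m : ℕ, ∀ n ≥ m, τ ^ n * g ∈ Bp)
    (ι : V' →ₗ[o] V)
    (hιeq : ∀ (b : H) (v : V'), ι (b • v) = b • ι v)
    (hst : IsStableSub o V (S : Set H) V0)
    (P : Ind o S V0 →ₗ[o] V) (hP : IsPresMap o hst P)
    (hker : IsFGOver o (↥(Ind o S V0)) (Set.univ : Set H) (LinearMap.ker P))
    (hgen0' : gspan o V' (Set.univ : Set H)
      ((Submodule.comap ι V0 : Submodule o V') : Set V') = ⊤) :
    ∃ N : Submodule o V, IsStableSub o V (S : Set H) N ∧ IsFGOver o V (S : Set H) N ∧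
      gspan o V Bp (V0 : Set V) ⊓ LinearMap.range ι ≤
        Submodule.map ι (gspan o V' Bp ((Submodule.comap ι V0 : Submodule o V') : Set V'))
          ⊔ N := by
  classical
  obtain ⟨R, hR1, hR2⟩ := hker
  have hK2 : ∀ (c : H) (v : V) (hv : v ∈ V0), P (c • unitElt o hst hv) = c • v := by
    intro c v hv
    rw [hP.1, hP.2]
  have hA : gspan o V Bp (V0 : Set V) ≤
      Submodule.map P (LinearMap.ker (restNeg Bp hBS)) := by
    unfold gspan
    apply Submodule.span_le.mpr
    rintro v ⟨b, hb, w, hw, rfl⟩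
    exact ⟨b • unitElt o hst hw,
      LinearMap.mem_ker.mpr (restNeg_unit_of_mem hBS hst hb hw), hK2 b w hw⟩
  have hsupp0 : ∀ ρ : ↥(Ind o S V0), ∃ Xf : Finset H,
      ∀ h : H, (ρ : H → V) h ≠ 0 → ∃ s ∈ S, ∃ x ∈ Xf, h = s * x := by
    intro ρ
    obtain ⟨_, _, Xf, hXf⟩ := ρ.2
    exact ⟨Xf, hXf⟩
  choose suppX hsupp using hsupp0
  choose M hM using hgrow
  obtain ⟨Z, hDgen⟩ : ∃ Z : Finset V, ∀ (d : H) (ρ : ↥(Ind o S V0)), ρ ∈ R →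
      P (restNeg Bp hBS (d • ρ)) ∈ gspan o V (S : Set H) (Z : Set V) := by
    refine ⟨R.biUnion fun ρ => (suppX ρ).biUnion fun x =>
      ((suppX ρ).powerset).biUnion fun T =>
        (Finset.range ((suppX ρ ×ˢ suppX ρ).sup fun p => M (p.1 * p.2⁻¹))).image
          fun n => (τ ^ n * x) • P (restT T ρ), ?_⟩
    intro d ρ hρR
    have hρker : P ρ = 0 := LinearMap.mem_ker.mp (hR1 (Finset.mem_coe.mpr hρR))
    rw [restNeg_smul_eq hBS d ρ (suppX ρ) (hsupp ρ), hP.1]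
    by_cases hall : ∀ x ∈ suppX ρ, d * x⁻¹ ∉ Bp
    · rw [restT_eq_self ρ _ (fun h hz => by
        obtain ⟨s, hs, x, hxX, hdec⟩ := hsupp ρ h hz
        exact ⟨s, hs, x, Finset.mem_filter.mpr ⟨hxX, hall x hxX⟩, hdec⟩)]
      rw [hρker, smul_zero]
      exact Submodule.zero_mem _
    · push_neg at hall
      obtain ⟨xi, hxiX, hxi⟩ := hall
      by_cases hTe : (suppX ρ).filter (fun x => d * x⁻¹ ∉ Bp) = ∅
      · rw [restT_empty ρ _ hTe, _root_.map_zero, smul_zero]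
        exact Submodule.zero_mem _
      · obtain ⟨xj, hxjT⟩ := Finset.nonempty_iff_ne_empty.mpr hTe
        have hxjX : xj ∈ suppX ρ := (Finset.mem_filter.mp hxjT).1
        have hxj : d * xj⁻¹ ∉ Bp := (Finset.mem_filter.mp hxjT).2
        obtain ⟨s, hs, n, hdsn⟩ := hfact _ hxi
        have hd : d = s * τ ^ n * xi := by rw [← hdsn]; group
        have hnlt : n < M (xi * xj⁻¹) := by
          by_contra hge
          apply hxj
          rw [hd, show s * τ ^ n * xi * xj⁻¹ = s * (τ ^ n * (xi * xj⁻¹)) by group]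
          exact hSB s hs _ (hM _ n (le_of_not_gt hge))
        have hzZ : (τ ^ n * xi) • P (restT ((suppX ρ).filter fun x => d * x⁻¹ ∉ Bp) ρ) ∈
            R.biUnion fun ρ => (suppX ρ).biUnion fun x =>
              ((suppX ρ).powerset).biUnion fun T =>
                (Finset.range ((suppX ρ ×ˢ suppX ρ).sup fun p => M (p.1 * p.2⁻¹))).image
                  fun n => (τ ^ n * x) • P (restT T ρ) := by
          apply Finset.mem_biUnion.mpr
          refine ⟨ρ, hρR, ?_⟩
          apply Finset.mem_biUnion.mpr
          refine ⟨xi, hxiX, ?_⟩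
          apply Finset.mem_biUnion.mpr
          refine ⟨(suppX ρ).filter (fun x => d * x⁻¹ ∉ Bp),
            Finset.mem_powerset.mpr (Finset.filter_subset _ _), ?_⟩
          apply Finset.mem_image.mpr
          refine ⟨n, Finset.mem_range.mpr ?_, rfl⟩
          exact lt_of_lt_of_le hnlt
            (Finset.le_sup (f := fun p : H × H => M (p.1 * p.2⁻¹))
              ((Finset.mem_product (p := (xi, xj))).mpr ⟨hxiX, hxjX⟩))
        have key : d • P (restT ((suppX ρ).filter fun x => d * x⁻¹ ∉ Bp) ρ)
            = s • ((τ ^ n * xi) • P (restT ((suppX ρ).filter fun x => d * x⁻¹ ∉ Bp) ρ)) := by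
          rw [← mul_smul, ← mul_assoc, ← hd]
        rw [key]
        exact Submodule.subset_span ⟨s, hs, _, hzZ, rfl⟩
  refine ⟨gspan o V (S : Set H) (Z : Set V), gspan_stable S _, ⟨Z, subset_gspan S _, rfl⟩, ?_⟩
  have hD : ∀ κ, κ ∈ LinearMap.ker P →
      P (restNeg Bp hBS κ) ∈ gspan o V (S : Set H) (Z : Set V) := by
    intro κ hκ
    rw [hR2] at hκ
    unfold gspan at hκ
    induction hκ using Submodule.span_induction with
    | mem f hf =>
      obtain ⟨dd, _, ρ, hρ, rfl⟩ := hf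
      exact hDgen dd ρ (Finset.mem_coe.mp hρ)
    | zero => rw [_root_.map_zero, _root_.map_zero]; exact Submodule.zero_mem _
    | add a b _ _ ha hb => rw [_root_.map_add, _root_.map_add]; exact Submodule.add_mem _ ha hb
    | smul c a _ ha => rw [_root_.map_smul, _root_.map_smul]; exact Submodule.smul_mem _ c ha
  have hC : ∀ v' : V', ∃ f' : ↥(Ind o S V0), P f' = ι v' ∧
      P (f' - restNeg Bp hBS f') ∈ Submodule.map ι
        (gspan o V' Bp ((Submodule.comap ι V0 : Submodule o V') : Set V')) := by
    intro v'
    have hv' : v' ∈ gspan o V' (Set.univ : Set H)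
        ((Submodule.comap ι V0 : Submodule o V') : Set V') := by
      rw [hgen0']; exact Submodule.mem_top
    unfold gspan at hv'
    induction hv' using Submodule.span_induction with
    | mem w hw =>
      obtain ⟨dd, _, y, hy, rfl⟩ := hw
      have hyV0 : ι y ∈ V0 := hy
      refine ⟨dd • unitElt o hst hyV0, ?_, ?_⟩
      · rw [hK2, hιeq]
      · by_cases hdBp : dd ∈ Bp
        · rw [restNeg_unit_of_mem hBS hst hdBp hyV0, sub_zero, hK2, ← hιeq]
          exact Submodule.mem_map_of_mem (Submodule.subset_span ⟨dd, hdBp, y, hy, rfl⟩)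
        · rw [restNeg_unit_of_not_mem hBS hst hdBp hyV0, sub_self, _root_.map_zero]
          exact Submodule.zero_mem _
    | zero =>
      refine ⟨0, by rw [_root_.map_zero, _root_.map_zero], ?_⟩
      rw [_root_.map_zero, sub_zero, _root_.map_zero]
      exact Submodule.zero_mem _
    | add a b _ _ ha hb =>
      obtain ⟨f1, h1, h1'⟩ := ha
      obtain ⟨f2, h2, h2'⟩ := hb
      refine ⟨f1 + f2, by rw [_root_.map_add, h1, h2, _root_.map_add], ?_⟩
      have hsplit : f1 + f2 - restNeg Bp hBS (f1 + f2)
          = (f1 - restNeg Bp hBS f1) + (f2 - restNeg Bp hBS f2) := by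
        rw [_root_.map_add]; abel
      rw [hsplit, _root_.map_add]
      exact Submodule.add_mem _ h1' h2'
    | smul c a _ ha =>
      obtain ⟨f1, h1, h1'⟩ := ha
      refine ⟨c • f1, by rw [_root_.map_smul, h1, _root_.map_smul], ?_⟩
      have hsplit : c • f1 - restNeg Bp hBS (c • f1) = c • (f1 - restNeg Bp hBS f1) := by
        rw [_root_.map_smul, smul_sub]
      rw [hsplit, _root_.map_smul]
      exact Submodule.smul_mem _ c h1'
  intro v hv
  rw [Submodule.mem_inf] at hv
  obtain ⟨hv1, hv2⟩ := hv
  obtain ⟨f, hfker, hfv⟩ := hA hv1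
  obtain ⟨v', rfl⟩ := hv2
  obtain ⟨f', hf'1, hf'2⟩ := hC v'
  have hκ : f - f' ∈ LinearMap.ker P := by
    rw [LinearMap.mem_ker, _root_.map_sub, hfv, hf'1, sub_self]
  have hNf' : P (restNeg Bp hBS f') ∈ gspan o V (S : Set H) (Z : Set V) := by
    have h1 : restNeg Bp hBS f' = restNeg Bp hBS f - restNeg Bp hBS (f - f') := by
      rw [_root_.map_sub]; abel
    have h2 : restNeg Bp hBS f = 0 := LinearMap.mem_ker.mp hfker
    rw [h1, h2, zero_sub, _root_.map_neg]
    exact Submodule.neg_mem _ (hD _ hκ)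
  have hcan : f' - restNeg Bp hBS f' + restNeg Bp hBS f' = f' := by abel
  have hsplitv : ι v' = P (f' - restNeg Bp hBS f') + P (restNeg Bp hBS f') := by
    rw [← _root_.map_add, hcan, hf'1]
  rw [hsplitv]
  exact Submodule.add_mem_sup hf'2 hNf'

end AbstractRest

/-- For an exact sequence `0 → V' → V → V'' → 0` of smooth
`B`-representations with `V'` of finite type and `V` of finite presentation via `V₀` such
that `V₀' = V₀ ∩ V'` generates `V'`, the intersection `<B⁺V₀> ∩ V'` is contained in
`<B⁺V₀'>` up to a finitely generated `o[B₀Z]`-module; consequently the sequence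
`0 → <B⁺V₀'> → <B⁺V₀> → <B⁺V₀''> → 0` is exact modulo finitely generated
`o[B₀Z]`-modules. -/
theorem statement5
    (o : Type) [CommRing o] [IsNoetherianRing o]
    (F : Type) [Field F] [TopologicalSpace F] [IsTopologicalRing F] (LF : NALF F)
    (V' : Type) [AddCommGroup V'] [Module o V']
    [DistribMulAction (↥(Bgr F)) V'] [SMulCommClass (↥(Bgr F)) o V']
    (hsm' : IsSmoothRep o (↥(Bgr F)) V')
    (V : Type) [AddCommGroup V] [Module o V]
    [DistribMulAction (↥(Bgr F)) V] [SMulCommClass (↥(Bgr F)) o V]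
    (hsm : IsSmoothRep o (↥(Bgr F)) V)
    (V'' : Type) [AddCommGroup V''] [Module o V'']
    [DistribMulAction (↥(Bgr F)) V''] [SMulCommClass (↥(Bgr F)) o V'']
    (hsm'' : IsSmoothRep o (↥(Bgr F)) V'')
    (ι : V' →ₗ[o] V) (hιinj : Function.Injective ⇑ι)
    (hιeq : ∀ (b : ↥(Bgr F)) (v : V'), ι (b • v) = b • ι v)
    (π : V →ₗ[o] V'') (hπsurj : Function.Surjective ⇑π)
    (hπeq : ∀ (b : ↥(Bgr F)) (v : V), π (b • v) = b • π v)
    (hexact : LinearMap.range ι = LinearMap.ker π)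
    (hV'ft : ∃ X : Finset V', gspan o V' (Set.univ : Set ↥(Bgr F)) (X : Set V') = ⊤)
    (V0 : Submodule o V)
    (hst : IsStableSub o V ((B0Zb F LF : Subgroup ↥(Bgr F)) : Set ↥(Bgr F)) V0)
    (hfg : IsFGOver o V ((B0Zb F LF : Subgroup ↥(Bgr F)) : Set ↥(Bgr F)) V0)
    (hgen : gspan o V (Set.univ : Set ↥(Bgr F)) (V0 : Set V) = ⊤)
    (P : Ind o (B0Zb F LF) V0 →ₗ[o] V) (hP : IsPresMap o hst P)
    (hker : IsFGOver o (↥(Ind o (B0Zb F LF) V0)) (Set.univ : Set ↥(Bgr F)) (LinearMap.ker P))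
    (hgen0' : gspan o V' (Set.univ : Set ↥(Bgr F)) ((Submodule.comap ι V0 : Submodule o V') : Set V') = ⊤) :
    (∃ N : Submodule o V,
      IsStableSub o V ((B0Zb F LF : Subgroup ↥(Bgr F)) : Set ↥(Bgr F)) N ∧
      IsFGOver o V ((B0Zb F LF : Subgroup ↥(Bgr F)) : Set ↥(Bgr F)) N ∧
      gspan o V (BplusB F LF) (V0 : Set V) ⊓ LinearMap.range ι ≤
        Submodule.map ι (gspan o V' (BplusB F LF) ((Submodule.comap ι V0 : Submodule o V') : Set V')) ⊔ N) ∧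
    (∃ N : Submodule o V,
      IsStableSub o V ((B0Zb F LF : Subgroup ↥(Bgr F)) : Set ↥(Bgr F)) N ∧
      IsFGOver o V ((B0Zb F LF : Subgroup ↥(Bgr F)) : Set ↥(Bgr F)) N ∧
      Submodule.map ι (gspan o V' (BplusB F LF) ((Submodule.comap ι V0 : Submodule o V') : Set V')) ⊔ N
        = (gspan o V (BplusB F LF) (V0 : Set V) ⊓ LinearMap.ker π) ⊔ N) ∧
    (∃ N'' : Submodule o V'',
      IsStableSub o V'' ((B0Zb F LF : Subgroup ↥(Bgr F)) : Set ↥(Bgr F)) N'' ∧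
      IsFGOver o V'' ((B0Zb F LF : Subgroup ↥(Bgr F)) : Set ↥(Bgr F)) N'' ∧
      Submodule.map π (gspan o V (BplusB F LF) (V0 : Set V)) ⊔ N''
        = gspan o V'' (BplusB F LF) ((Submodule.map π V0 : Submodule o V'') : Set V'') ⊔ N'') := by
  classical
  have hSB : ∀ s ∈ B0Zb F LF, ∀ b ∈ BplusB F LF, s * b ∈ BplusB F LF :=
    fun s hs b hb => BplusB_mul_left F LF hs hb
  have hBS : ∀ b ∈ BplusB F LF, ∀ s ∈ B0Zb F LF, b * s ∈ BplusB F LF :=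
    fun b hb s hs => BplusB_mul_right F LF hb hs
  have hfact : ∀ b ∈ BplusB F LF, ∃ s ∈ B0Zb F LF, ∃ n : ℕ, b = s * (tB F LF) ^ n :=
    fun b hb => (mem_BplusB_iff F LF b).mp hb
  have hgrow : ∀ g : ↥(Bgr F), ∃ m : ℕ, ∀ n ≥ m, (tB F LF) ^ n * g ∈ BplusB F LF :=
    exists_pow_ge_BplusB F LF
  obtain ⟨N, hNst, hNfg, hNle⟩ :=
    abstract_main (BplusB F LF) (tB F LF) hSB hBS hfact hgrow ι hιeq hst P hP hker hgen0'
  have hW'le : ∀ w' ∈ gspan o V' (BplusB F LF)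
      ((Submodule.comap ι V0 : Submodule o V') : Set V'),
      ι w' ∈ gspan o V (BplusB F LF) (V0 : Set V) := by
    intro w' hw'
    unfold gspan at hw' ⊢
    induction hw' using Submodule.span_induction with
    | mem w hw =>
      obtain ⟨b, hb, y, hy, rfl⟩ := hw
      rw [hιeq]
      exact Submodule.subset_span ⟨b, hb, ι y, hy, rfl⟩
    | zero => rw [_root_.map_zero]; exact Submodule.zero_mem _
    | add a b _ _ ha hb => rw [_root_.map_add]; exact Submodule.add_mem _ ha hb
    | smul c a _ ha => rw [_root_.map_smul]; exact Submodule.smul_mem _ c ha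
  have hπ1 : ∀ w ∈ gspan o V (BplusB F LF) (V0 : Set V),
      π w ∈ gspan o V'' (BplusB F LF) ((Submodule.map π V0 : Submodule o V'') : Set V'') := by
    intro w hw
    unfold gspan at hw ⊢
    induction hw using Submodule.span_induction with
    | mem w hw =>
      obtain ⟨b, hb, y, hy, rfl⟩ := hw
      rw [hπeq]
      exact Submodule.subset_span ⟨b, hb, π y, ⟨y, hy, rfl⟩, rfl⟩
    | zero => rw [_root_.map_zero]; exact Submodule.zero_mem _
    | add a b _ _ ha hb => rw [_root_.map_add]; exact Submodule.add_mem _ ha hb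
    | smul c a _ ha => rw [_root_.map_smul]; exact Submodule.smul_mem _ c ha
  refine ⟨⟨N, hNst, hNfg, hNle⟩, ⟨N, hNst, hNfg, ?_⟩, ⟨⊥, ?_, ?_, ?_⟩⟩
  · -- second statement: equality up to N
    apply le_antisymm
    · apply sup_le _ le_sup_right
      intro x hx
      obtain ⟨w', hw', rfl⟩ := hx
      refine Submodule.mem_sup_left (Submodule.mem_inf.mpr ⟨hW'le w' hw', ?_⟩)
      rw [← hexact]
      exact ⟨w', rfl⟩
    · apply sup_le _ le_sup_right
      rw [← hexact]
      exact hNle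
  · -- N'' = ⊥ is stable
    intro s _ v hv
    rw [Submodule.mem_bot] at hv ⊢
    rw [hv, smul_zero]
  · -- N'' = ⊥ is finitely generated
    refine ⟨∅, by simp, ?_⟩
    refine (Submodule.span_eq_bot.mpr ?_).symm
    rintro x ⟨s, hs, w, hw, rfl⟩
    simp at hw
  · -- third statement
    rw [sup_bot_eq, sup_bot_eq]
    apply le_antisymm
    · intro x hx
      obtain ⟨w, hw, rfl⟩ := hx
      exact hπ1 w hw
    · unfold gspan
      apply Submodule.span_le.mpr
      rintro x ⟨b, hb, w'', hw'', rfl⟩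
      obtain ⟨w, hw, rfl⟩ := hw''
      rw [← hπeq]
      exact Submodule.mem_map_of_mem (Submodule.subset_span ⟨b, hb, w, hw, rfl⟩)
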